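/- Let u, v ∈ A*, let s be the longest suffix of v that is also a prefix of u, and write v = rs, u = st. Then u v̄ ≡ r̄ · shuffle(s, s̄) · t, where shuffle(s, s̄) = s₁s̄₁ s₂s̄₂ … sₖs̄ₖ for s = s₁…sₖ. -/

import Mathlib

/-- A basic queue action: write a letter or read a letter. -/
inductive Act (A : Type) : Type
  | wr (a : A)
  | rd (a : A)
deriving DecidableEq

variable {A : Type} [DecidableEq A]

/-- The action of words over `Act A` on queue states `A* ∪ {⊥}` (⊥ = `none`). -/
def act : Option (List A) → List (Act A) → Option (List A)
  | q, [] => q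
  | none, _ :: _ => none
  | some q, (Act.wr a) :: u => act (some (q ++ [a])) u
  | some q, (Act.rd a) :: u =>
    match q with
    | [] => none
    | b :: q' => if b = a then act (some q') u else none

/-- Two words over `Act A` are equivalent if they act identically on all queues. -/
def qequiv (u v : List (Act A)) : Prop := ∀ q : List A, act (some q) u = act (some q) v

/-- Writing the word `w`. -/
def W (w : List A) : List (Act A) := w.map Act.wr

/-- Reading the word `w` (the barred copy of `w`). -/
def R (w : List A) : List (Act A) := w.map Act.rd

/-- `shuffle s` is the word `s₁ s̄₁ s₂ s̄₂ … sₖ s̄ₖ`. -/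
def shuffle (s : List A) : List (Act A) := s.flatMap fun a => [Act.wr a, Act.rd a]

/-- The projection to write letters. -/
def prW (w : List (Act A)) : List A :=
  w.filterMap fun x => match x with | Act.wr a => some a | Act.rd _ => none

/-- The projection to read letters (with the bars removed). -/
def prR (w : List (Act A)) : List A :=
  w.filterMap fun x => match x with | Act.wr _ => none | Act.rd a => some a

theorem act_append (u v : List (Act A)) : ∀ q, act q (u ++ v) = act (act q u) v := by
  induction u with
  | nil =>
      intro q
      cases q <;> rfl
  | cons x u ih =>
      intro q
      cases q with
      | none =>
          simp only [List.cons_append, act]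
          cases v with
          | nil => rfl
          | cons _ _ => rfl
      | some q =>
          cases x with
          | wr a => simpa [act] using ih _
          | rd a =>
              cases q with
              | nil =>
                  simp only [List.cons_append, act]
                  cases v with
                  | nil => rfl
                  | cons _ _ => rfl
              | cons b q' =>
                  by_cases h : b = a
                  · simp [List.cons_append, act, h, ih]
                  · simp only [List.cons_append, act, if_neg h]
                    cases v with
                    | nil => rfl
                    | cons _ _ => rfl

/-- The setoid of queue-action equivalence. -/
def qsetoid (A : Type) [DecidableEq A] : Setoid (List (Act A)) :=
  ⟨qequiv, ⟨fun _ _ => rfl, fun h q => (h q).symm, fun h1 h2 q => (h1 q).trans (h2 q)⟩⟩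

/-- The monoid of queue actions. -/
def QAct (A : Type) [DecidableEq A] : Type := Quotient (qsetoid A)

theorem act_none : ∀ v : List (Act A), act (none : Option (List A)) v = none
  | [] => rfl
  | _ :: _ => rfl

theorem qequiv_append {u u' v v' : List (Act A)} (hu : qequiv u u') (hv : qequiv v v') :
    qequiv (u ++ v) (u' ++ v') := by
  intro q
  rw [act_append, act_append, hu q]
  cases h : act (some q) u' with
  | none => rw [act_none, act_none]
  | some q' => exact hv q'

instance : Monoid (QAct A) where
  mul := Quotient.map₂ (· ++ ·) (fun _ _ hu _ _ hv => qequiv_append hu hv)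
  one := Quotient.mk (qsetoid A) []
  mul_assoc := by
    rintro ⟨u⟩ ⟨v⟩ ⟨w⟩
    exact congrArg (Quotient.mk (qsetoid A)) (List.append_assoc u v w)
  one_mul := by
    rintro ⟨u⟩
    rfl
  mul_one := by
    rintro ⟨u⟩
    exact congrArg (Quotient.mk (qsetoid A)) (List.append_nil u)

/-- The class of a word in the monoid of queue actions. -/
def cls (w : List (Act A)) : QAct A := Quotient.mk (qsetoid A) w

theorem cls_mul (u v : List (Act A)) : cls u * cls v = cls (u ++ v) := rfl

theorem act_W (w : List A) : ∀ q, act (some q) (W w) = some (q ++ w) := by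
  induction w with
  | nil => intro q; simp [W, act]
  | cons a w ih =>
      intro q
      simp only [W, List.map_cons, act] at *
      rw [ih]
      simp

theorem act_R (w : List A) : ∀ q, act (some q) (R w) =
    if w <+: q then some (q.drop w.length) else none := by
  induction w with
  | nil => intro q; simp [R, act]
  | cons a w ih =>
      intro q
      cases q with
      | nil =>
          simp only [R, List.map_cons, act]
          rw [if_neg]
          intro hp
          simpa using hp.length_le
      | cons b q' =>
          simp only [R, List.map_cons, act]
          by_cases h : b = a
          · subst h
            rw [if_pos rfl, show List.map Act.rd w = R w from rfl, ih]
            simp [List.cons_prefix_cons]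
          · rw [if_neg h, if_neg]
            intro hp
            rw [List.cons_prefix_cons] at hp
            exact h hp.1.symm

theorem act_shuffle (s : List A) :
    ∀ p, act (some p) (shuffle s) = act (some (p ++ s)) (R s) := by
  induction s with
  | nil => intro p; simp [shuffle, R, act]
  | cons a s ih =>
      intro p
      have hsh : shuffle (a :: s) = Act.wr a :: Act.rd a :: shuffle s := rfl
      have hR : R (a :: s) = Act.rd a :: R s := rfl
      rw [hsh, hR]
      cases p with
      | nil =>
          simp only [act, List.nil_append, if_pos rfl]
          exact ih []
      | cons b p' =>
          simp only [act, List.cons_append]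
          by_cases h : b = a
          · rw [if_pos h, if_pos h, ih]
            have : p' ++ [a] ++ s = p' ++ a :: s := by simp
            rw [this]
          · rw [if_neg h, if_neg h]

/-- If `s` is the longest suffix of `v` that is also a prefix of `u`, with `v = r s` and
`u = s t`, then `u v̄ ≡ r̄ · shuffle(s, s̄) · t`. -/
theorem stmt10 [Fintype A] [Nontrivial A] (u v r s t : List A)
    (hv : v = r ++ s) (hu : u = s ++ t)
    (hmax : ∀ s' : List A, s' <:+ v → s' <+: u → s'.length ≤ s.length) :
    qequiv (W u ++ R v) (R r ++ shuffle s ++ W t) := by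
  subst hv hu
  intro q
  rw [act_append, act_W, act_R, act_append, act_append, act_R]
  by_cases hr : r <+: q
  · obtain ⟨q', rfl⟩ := hr
    rw [if_pos (List.prefix_append r q'), List.drop_left, act_shuffle, act_R]
    by_cases hs : s <+: q' ++ s
    · rw [if_pos hs, act_W]
      rw [if_pos]
      · congr 1
        rw [List.length_append, List.append_assoc r, List.drop_length_add_append, ← List.append_assoc,
          List.drop_append_of_le_length (by simp)]
      · rw [List.append_assoc r, List.prefix_append_right_inj, ← List.append_assoc]
        exact hs.trans (List.prefix_append _ _)
    · rw [if_neg hs, act_none, if_neg]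
      intro hp
      apply hs
      rw [List.append_assoc r, List.prefix_append_right_inj, ← List.append_assoc] at hp
      exact List.prefix_of_prefix_length_le hp (List.prefix_append _ _) (by simp)
  · rw [if_neg hr, act_none, act_none, if_neg]
    intro hp
    rcases Nat.le_total r.length q.length with hle | hle
    · exact hr (List.prefix_of_prefix_length_le
        ((List.prefix_append r s).trans hp) (List.prefix_append q _) hle)
    · have hq : q <+: r :=
        List.prefix_of_prefix_length_le (List.prefix_append q _)
          ((List.prefix_append r s).trans hp) hle
      obtain ⟨m, rfl⟩ := hq
      have hm : m ≠ [] := by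
        rintro rfl
        exact hr (by simp)
      obtain ⟨w, hw⟩ := hp
      rw [show q ++ m ++ s ++ w = q ++ (m ++ (s ++ w)) by simp] at hw
      have hw' : m ++ (s ++ w) = s ++ t := List.append_cancel_left hw
      have hpre : m ++ s <+: s ++ t := ⟨w, by simpa [List.append_assoc] using hw'⟩
      have hsuf : m ++ s <:+ q ++ m ++ s := ⟨q, by simp⟩
      have := hmax (m ++ s) hsuf hpre
      simp only [List.length_append] at this
      have : m.length = 0 := by omega
      exact hm (List.eq_nil_of_length_eq_zero this)
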